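/- Let λ ∈ (−1/2, ∞)^n. Then, uniformly in x ∈ (0,∞)^n and R > 0, the measure w_λ^+(B(x,R)) of the Euclidean ball B(x,R) ∩ (0,∞)^n with respect to dw_λ^+(y) = Π_{j=1}^n y_j^{2λ_j} dy is comparable to R^n · Π_{j=1}^n (x_j + R)^{2λ_j}; i.e., there exist constants c, C > 0 depending only on λ and n such that c·R^n·Π_j (x_j+R)^{2λ_j} ≤ w_λ^+(B(x,R)) ≤ C·R^n·Π_j (x_j+R)^{2λ_j}. -/

import Mathlib

open MeasureTheory
open scoped BigOperators

/-- The measure of `B(x,R) ∩ (0,∞)^n` with respect to `∏ y_j^{2λ_j} dy`. -/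
noncomputable def wMeasBall {n : ℕ} (l : Fin n → ℝ) (x : EuclideanSpace ℝ (Fin n)) (R : ℝ) : ℝ :=
  ∫ y in Metric.ball x R ∩ {y : EuclideanSpace ℝ (Fin n) | ∀ j, 0 < y j},
    ∏ j, (y j) ^ (2 * l j)


lemma intOnIoo {p : ℝ} (hp : -1 < p) {a b : ℝ} :
    IntegrableOn (fun t : ℝ => t ^ p) (Set.Ioo a b) :=
  (intervalIntegral.intervalIntegrable_rpow' (a := a) (b := b) hp).1.mono_set Set.Ioo_subset_Ioc_self

lemma intNonneg {p : ℝ} {a b : ℝ} (ha : 0 ≤ a) :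
    0 ≤ ∫ t in Set.Ioo a b, t ^ p :=
  setIntegral_nonneg measurableSet_Ioo fun t ht =>
    Real.rpow_nonneg (le_of_lt (lt_of_le_of_lt ha ht.1)) _

lemma constIntIoo (a b : ℝ) (c : ℝ) (hab : a ≤ b) :
    ∫ _ in Set.Ioo a b, c = (b - a) * c := by
  rw [setIntegral_const, Real.volume_real_Ioo, max_eq_left (by linarith), smul_eq_mul]

lemma oneD_upper {p : ℝ} (hp : -1 < p) :
    ∃ C : ℝ, 0 < C ∧ ∀ x R : ℝ, 0 < x → 0 < R →
      ∫ t in Set.Ioo (max (x - R) 0) (x + R), t ^ p ≤ C * (R * (x + R) ^ p) := by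
  have h1 : (0:ℝ) < p + 1 := by linarith
  rcases le_or_gt 0 p with hp0 | hp0
  · refine ⟨2, by norm_num, fun x R hx hR => ?_⟩
    set a := max (x - R) 0 with ha
    set b := x + R with hb
    have ha0 : 0 ≤ a := le_max_right _ _
    have hab : a ≤ b := by
      rcases max_cases (x - R) 0 with ⟨h, _⟩ | ⟨h, _⟩ <;> rw [ha, h, hb] <;> linarith
    have hbpos : 0 < b := by positivity
    calc ∫ t in Set.Ioo a b, t ^ p
        ≤ ∫ _ in Set.Ioo a b, b ^ p := by
          refine setIntegral_mono_on (intOnIoo hp) (integrableOn_const ?_)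
            measurableSet_Ioo fun t ht => ?_
          · rw [Real.volume_Ioo]; exact ENNReal.ofReal_ne_top
          · exact Real.rpow_le_rpow (le_trans ha0 ht.1.le) ht.2.le hp0
      _ = (b - a) * b ^ p := constIntIoo a b _ hab
      _ ≤ 2 * R * b ^ p := by
          have : b - a ≤ 2 * R := by
            have : x - R ≤ a := le_max_left _ _
            rw [hb]; linarith
          exact mul_le_mul_of_nonneg_right this (Real.rpow_nonneg hbpos.le _)
      _ = 2 * (R * b ^ p) := by ring
  · refine ⟨3 / (p + 1) + 2 * (3:ℝ) ^ (-p), by positivity, fun x R hx hR => ?_⟩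
    set b := x + R with hb
    have hbpos : 0 < b := by positivity
    have hbp : (0:ℝ) < b ^ p := Real.rpow_pos_of_pos hbpos _
    have hRb : 0 < R * b ^ p := by positivity
    rcases le_or_gt x (2 * R) with hx2 | hx2
    · have hsub : Set.Ioo (max (x - R) 0) b ⊆ Set.Ioo 0 b :=
        Set.Ioo_subset_Ioo (le_max_right _ _) le_rfl
      have h2 : ∫ t in Set.Ioo (max (x - R) 0) b, t ^ p ≤ ∫ t in Set.Ioo 0 b, t ^ p := by
        refine setIntegral_mono_set (intOnIoo hp) ?_ (HasSubset.Subset.eventuallyLE hsub)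
        filter_upwards [ae_restrict_mem measurableSet_Ioo] with t ht
        exact Real.rpow_nonneg ht.1.le _
      have h3 : ∫ t in Set.Ioo 0 b, t ^ p = b ^ (p + 1) / (p + 1) := by
        rw [← MeasureTheory.integral_Ioc_eq_integral_Ioo,
          ← intervalIntegral.integral_of_le hbpos.le, integral_rpow (Or.inl hp),
          Real.zero_rpow (ne_of_gt h1), sub_zero]
      have h4 : b ^ (p + 1) = b ^ p * b := Real.rpow_add_one (ne_of_gt hbpos) p
      have h5 : b ≤ 3 * R := by rw [hb]; linarith
      calc ∫ t in Set.Ioo (max (x - R) 0) b, t ^ p ≤ b ^ (p + 1) / (p + 1) := h2.trans h3.le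
        _ = b ^ p * b / (p + 1) := by rw [h4]
        _ ≤ b ^ p * (3 * R) / (p + 1) := by
            gcongr
        _ = 3 / (p + 1) * (R * b ^ p) := by ring
        _ ≤ (3 / (p + 1) + 2 * (3:ℝ) ^ (-p)) * (R * b ^ p) := by
            have : (0:ℝ) ≤ 2 * (3:ℝ) ^ (-p) := by positivity
            nlinarith
    · set a := x - R with ha
      have hamax : max (x - R) 0 = a := max_eq_left (by linarith)
      have hapos : 0 < a := by rw [ha]; linarith
      have hab : a ≤ b := by rw [ha, hb]; linarith
      have h3a : b / 3 ≤ a := by rw [ha, hb]; linarith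
      have hb3 : 0 < b / 3 := by positivity
      calc ∫ t in Set.Ioo (max (x - R) 0) b, t ^ p
          ≤ ∫ _ in Set.Ioo (max (x - R) 0) b, a ^ p := by
            refine setIntegral_mono_on (intOnIoo hp) (integrableOn_const ?_)
              measurableSet_Ioo fun t ht => ?_
            · rw [Real.volume_Ioo]; exact ENNReal.ofReal_ne_top
            · rw [hamax] at ht
              exact Real.rpow_le_rpow_of_nonpos hapos ht.1.le hp0.le
        _ = (b - a) * a ^ p := by rw [hamax]; exact constIntIoo a b _ hab
        _ ≤ 2 * R * (b / 3) ^ p := by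
            have h1' : b - a = 2 * R := by rw [ha, hb]; ring
            rw [h1']
            exact mul_le_mul_of_nonneg_left
              (Real.rpow_le_rpow_of_nonpos hb3 h3a hp0.le) (by positivity)
        _ = 2 * (3:ℝ) ^ (-p) * (R * b ^ p) := by
            rw [Real.div_rpow hbpos.le (by norm_num : (0:ℝ) ≤ 3), Real.rpow_neg (by norm_num)]
            field_simp
        _ ≤ (3 / (p + 1) + 2 * (3:ℝ) ^ (-p)) * (R * b ^ p) := by
            have : (0:ℝ) < 3 / (p + 1) := by positivity
            nlinarith

lemma oneD_lower {p : ℝ} (hp : -1 < p) {ρ : ℝ} (hρ : 0 < ρ) (hρ1 : ρ ≤ 1) :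
    ∃ c : ℝ, 0 < c ∧ ∀ x R : ℝ, 0 < x → 0 < R →
      c * (R * (x + R) ^ p) ≤ ∫ t in Set.Ioo x (x + ρ * R), t ^ p := by
  rcases le_or_gt p 0 with hp0 | hp0
  · refine ⟨ρ, hρ, fun x R hx hR => ?_⟩
    have hb : x < x + ρ * R := by nlinarith
    calc ρ * (R * (x + R) ^ p) = (x + ρ * R - x) * (x + R) ^ p := by ring
      _ = ∫ _ in Set.Ioo x (x + ρ * R), (x + R) ^ p := (constIntIoo _ _ _ hb.le).symm
      _ ≤ ∫ t in Set.Ioo x (x + ρ * R), t ^ p := by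
          refine setIntegral_mono_on (integrableOn_const ?_) (intOnIoo hp)
            measurableSet_Ioo fun t ht => ?_
          · rw [Real.volume_Ioo]; exact ENNReal.ofReal_ne_top
          · refine Real.rpow_le_rpow_of_nonpos (lt_trans hx ht.1) ?_ hp0
            have : t < x + ρ * R := ht.2
            nlinarith
  · refine ⟨(ρ / 2) ^ (p + 1), Real.rpow_pos_of_pos (by linarith) _, fun x R hx hR => ?_⟩
    have hsub : Set.Ioo (x + ρ * R / 2) (x + ρ * R) ⊆ Set.Ioo x (x + ρ * R) :=
      Set.Ioo_subset_Ioo (by nlinarith) le_rfl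
    have hkey : (ρ / 2) ^ (p + 1) * (R * (x + R) ^ p)
        ≤ ∫ t in Set.Ioo (x + ρ * R / 2) (x + ρ * R), t ^ p := by
      have hc : 0 ≤ ρ / 2 * (x + R) := by positivity
      calc (ρ / 2) ^ (p + 1) * (R * (x + R) ^ p)
          = (x + ρ * R - (x + ρ * R / 2)) * (ρ / 2 * (x + R)) ^ p := by
            rw [Real.mul_rpow (by positivity) (by positivity),
              Real.rpow_add_one (by positivity : (ρ/2 : ℝ) ≠ 0) p]
            ring
        _ = ∫ _ in Set.Ioo (x + ρ * R / 2) (x + ρ * R), (ρ / 2 * (x + R)) ^ p :=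
            (constIntIoo _ _ _ (by nlinarith)).symm
        _ ≤ ∫ t in Set.Ioo (x + ρ * R / 2) (x + ρ * R), t ^ p := by
            refine setIntegral_mono_on (integrableOn_const ?_) (intOnIoo hp)
              measurableSet_Ioo fun t ht => ?_
            · rw [Real.volume_Ioo]; exact ENNReal.ofReal_ne_top
            · refine Real.rpow_le_rpow hc ?_ hp0.le
              have h1 : x + ρ * R / 2 < t := ht.1
              nlinarith
    refine hkey.trans (setIntegral_mono_set (intOnIoo hp) ?_ (HasSubset.Subset.eventuallyLE hsub))
    filter_upwards [ae_restrict_mem measurableSet_Ioo] with t ht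
    exact Real.rpow_nonneg (le_trans hx.le ht.1.le) _

lemma pi_restrict_eq {n : ℕ} (s : Fin n → Set ℝ) (hs : ∀ i, MeasurableSet (s i)) :
    (volume : Measure (Fin n → ℝ)).restrict (Set.univ.pi s)
      = Measure.pi (fun i => (volume : Measure ℝ).restrict (s i)) := by
  refine (Measure.pi_eq fun t ht => ?_).symm
  rw [Measure.restrict_apply (MeasurableSet.univ_pi ht), ← Set.pi_inter_distrib,
    volume_pi_pi]
  exact Finset.prod_congr rfl fun i _ => (Measure.restrict_apply (ht i)).symm

lemma box_integrable {n : ℕ} (s : Fin n → Set ℝ) (hs : ∀ i, MeasurableSet (s i))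
    (f : Fin n → ℝ → ℝ) (hf : ∀ i, IntegrableOn (f i) (s i)) :
    IntegrableOn (fun y : Fin n → ℝ => ∏ j, f j (y j)) (Set.univ.pi s) := by
  rw [IntegrableOn, pi_restrict_eq s hs]
  exact MeasureTheory.Integrable.fintype_prod_dep
    (μ := fun i => (volume : Measure ℝ).restrict (s i)) hf

lemma box_integral_eq {n : ℕ} (s : Fin n → Set ℝ) (hs : ∀ i, MeasurableSet (s i))
    (f : Fin n → ℝ → ℝ) (hf : ∀ i, IntegrableOn (f i) (s i)) :
    ∫ y in Set.univ.pi s, ∏ j, f j (y j) = ∏ j, ∫ t in s j, f j t := by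
  rw [show (∫ y in Set.univ.pi s, ∏ j, f j (y j)) =
    ∫ y, (∏ j, f j (y j)) ∂((volume : Measure (Fin n → ℝ)).restrict (Set.univ.pi s)) from rfl,
    pi_restrict_eq s hs]
  exact MeasureTheory.integral_fintype_prod_eq_prod f
    (μ := fun i => (volume : Measure ℝ).restrict (s i))

lemma euclid_box {n : ℕ} (s : Fin n → Set ℝ) (hs : ∀ i, MeasurableSet (s i))
    (f : Fin n → ℝ → ℝ) (hf : ∀ i, IntegrableOn (f i) (s i)) :
    IntegrableOn (fun y : EuclideanSpace ℝ (Fin n) => ∏ j, f j (y j))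
        {y : EuclideanSpace ℝ (Fin n) | ∀ j, y j ∈ s j} ∧
      ∫ y in {y : EuclideanSpace ℝ (Fin n) | ∀ j, y j ∈ s j}, ∏ j, f j (y j)
        = ∏ j, ∫ t in s j, f j t := by
  set e := (MeasurableEquiv.toLp 2 (Fin n → ℝ)).symm with he
  have hvol : MeasurePreserving e.symm volume volume :=
    (EuclideanSpace.volume_preserving_symm_measurableEquiv_toLp (Fin n)).symm
  have hpre : e.symm ⁻¹' {y : EuclideanSpace ℝ (Fin n) | ∀ j, y j ∈ s j} = Set.univ.pi s := by
    ext z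
    simp only [Set.mem_preimage, Set.mem_setOf_eq, Set.mem_univ_pi]
    rfl
  have hg : (fun z : Fin n → ℝ => (fun y : EuclideanSpace ℝ (Fin n) => ∏ j, f j (y j)) (e.symm z))
      = fun z : Fin n → ℝ => ∏ j, f j (z j) := rfl
  have h1 := box_integrable s hs f hf
  have h2 := hvol.restrict_preimage_emb (MeasurableEquiv.measurableEmbedding _)
    {y : EuclideanSpace ℝ (Fin n) | ∀ j, y j ∈ s j}
  constructor
  · refine (h2.integrable_comp_emb (MeasurableEquiv.measurableEmbedding _)).1 ?_
    rw [hpre]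
    exact h1
  · have h3 := hvol.setIntegral_preimage_emb (MeasurableEquiv.measurableEmbedding _)
      (fun y : EuclideanSpace ℝ (Fin n) => ∏ j, f j (y j))
      {y : EuclideanSpace ℝ (Fin n) | ∀ j, y j ∈ s j}
    rw [hpre] at h3
    rw [← h3]
    exact box_integral_eq s hs f hf

lemma coord_dist_le {n : ℕ} (y x : EuclideanSpace ℝ (Fin n)) (j : Fin n) :
    |y j - x j| ≤ dist y x := by
  rw [EuclideanSpace.dist_eq]
  have h1 : dist (y j) (x j) ^ 2 ≤ ∑ i, dist (y i) (x i) ^ 2 :=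
    Finset.single_le_sum (f := fun i => dist (y i) (x i) ^ 2)
      (fun i _ => sq_nonneg _) (Finset.mem_univ j)
  calc |y j - x j| = dist (y j) (x j) := (Real.dist_eq _ _).symm
    _ = Real.sqrt (dist (y j) (x j) ^ 2) := (Real.sqrt_sq dist_nonneg).symm
    _ ≤ _ := Real.sqrt_le_sqrt h1

theorem stmt4 {n : ℕ} (l : Fin n → ℝ) (hl : ∀ j, -1/2 < l j) :
    ∃ c C : ℝ, 0 < c ∧ 0 < C ∧
      ∀ (x : EuclideanSpace ℝ (Fin n)) (R : ℝ), (∀ j, 0 < x j) → 0 < R →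
        c * (R ^ n * ∏ j, (x j + R) ^ (2 * l j)) ≤ wMeasBall l x R ∧
        wMeasBall l x R ≤ C * (R ^ n * ∏ j, (x j + R) ^ (2 * l j)) := by
  have hp : ∀ j, (-1 : ℝ) < 2 * l j := fun j => by have := hl j; linarith
  rcases Nat.eq_zero_or_pos n with hn | hn
  · subst hn
    refine ⟨1, 1, one_pos, one_pos, fun x R hx hR => ?_⟩
    have hset : Metric.ball x R ∩ {y : EuclideanSpace ℝ (Fin 0) | ∀ j, 0 < y j} =
        {y : EuclideanSpace ℝ (Fin 0) | ∀ j, y j ∈ (Set.Ioo 0 1 : Set ℝ)} := by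
      ext y
      constructor
      · exact fun _ j => j.elim0
      · intro _
        refine ⟨?_, fun j => j.elim0⟩
        have : y = x := PiLp.ext fun j => j.elim0
        simp [Metric.mem_ball, this, hR]
    have h := (euclid_box (n := 0) (fun j => Set.Ioo 0 1)
      (fun j => measurableSet_Ioo) (fun j t => t ^ (2 * l j))
      (fun j => intOnIoo (hp j))).2
    rw [wMeasBall, hset]
    simp only [Finset.univ_eq_empty, Finset.prod_empty] at h ⊢
    rw [h]
    norm_num
  · set ρ : ℝ := (Real.sqrt n)⁻¹ with hρdef
    have hn0 : (0:ℝ) < n := by exact_mod_cast hn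
    have hsq : (0:ℝ) < Real.sqrt n := Real.sqrt_pos.2 hn0
    have hρ : 0 < ρ := inv_pos.2 hsq
    have hρ1 : ρ ≤ 1 := by
      rw [hρdef]
      refine inv_le_one_of_one_le₀ ?_
      rw [show (1:ℝ) = Real.sqrt 1 by simp]
      exact Real.sqrt_le_sqrt (by exact_mod_cast hn)
    have hρ2 : ρ ^ 2 = (n : ℝ)⁻¹ := by
      rw [hρdef, inv_pow, Real.sq_sqrt hn0.le]
    choose Cu hCu0 hCu using fun j : Fin n => oneD_upper (hp j)
    choose cl hcl0 hcl using fun j : Fin n => oneD_lower (hp j) hρ hρ1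
    refine ⟨∏ j, cl j, ∏ j, Cu j, Finset.prod_pos (fun j _ => hcl0 j),
      Finset.prod_pos (fun j _ => hCu0 j), fun x R hx hR => ?_⟩
    have hprodsplit : ∀ K G : Fin n → ℝ,
        ∏ j, (K j * (R * G j)) = (∏ j, K j) * (R ^ n * ∏ j, G j) := by
      intro K G
      rw [Finset.prod_mul_distrib, Finset.prod_mul_distrib, Finset.prod_const,
        Finset.card_univ, Fintype.card_fin]
    -- boxes
    set S := Metric.ball x R ∩ {y : EuclideanSpace ℝ (Fin n) | ∀ j, 0 < y j} with hS
    have hSmeas : MeasurableSet S := by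
      refine measurableSet_ball.inter ?_
      rw [Set.setOf_forall]
      exact MeasurableSet.iInter fun j =>
        measurableSet_preimage (by fun_prop) measurableSet_Ioi
    have hbox := euclid_box (fun j => Set.Ioo (max (x j - R) 0) (x j + R))
      (fun j => measurableSet_Ioo) (fun j t => t ^ (2 * l j)) (fun j => intOnIoo (hp j))
    have hcube := euclid_box (fun j => Set.Ioo (x j) (x j + ρ * R))
      (fun j => measurableSet_Ioo) (fun j t => t ^ (2 * l j)) (fun j => intOnIoo (hp j))
    -- inclusions
    have hSsubBox : S ⊆ {y : EuclideanSpace ℝ (Fin n) |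
        ∀ j, y j ∈ Set.Ioo (max (x j - R) 0) (x j + R)} := by
      rintro y ⟨hyb, hy0⟩ j
      have h1 : |y j - x j| < R := lt_of_le_of_lt (coord_dist_le y x j) hyb
      rw [abs_lt] at h1
      exact ⟨max_lt (by linarith [h1.1]) (hy0 j), by linarith [h1.2]⟩
    have hcubesubS : {y : EuclideanSpace ℝ (Fin n) |
        ∀ j, y j ∈ Set.Ioo (x j) (x j + ρ * R)} ⊆ S := by
      intro y hy
      refine ⟨?_, fun j => lt_trans (hx j) (hy j).1⟩
      rw [Metric.mem_ball, EuclideanSpace.dist_eq]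
      have hsum : ∑ i, dist (y i) (x i) ^ 2 < R ^ 2 := by
        have hstep : ∀ i : Fin n, dist (y i) (x i) ^ 2 < (ρ * R) ^ 2 := by
          intro i
          have h1 := (hy i).1
          have h2 := (hy i).2
          have : dist (y i) (x i) < ρ * R := by
            rw [Real.dist_eq, abs_lt]; constructor <;> nlinarith
          exact pow_lt_pow_left₀ this dist_nonneg (by norm_num)
        haveI : Nonempty (Fin n) := ⟨⟨0, hn⟩⟩
        calc ∑ i, dist (y i) (x i) ^ 2 < ∑ _i : Fin n, (ρ * R) ^ 2 :=
              Finset.sum_lt_sum_of_nonempty Finset.univ_nonempty (fun i _ => hstep i)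
          _ = n * (ρ * R) ^ 2 := by
              rw [Finset.sum_const, Finset.card_univ, Fintype.card_fin, nsmul_eq_mul]
          _ = R ^ 2 := by
              rw [mul_pow, hρ2]
              field_simp
      calc Real.sqrt (∑ i, dist (y i) (x i) ^ 2) < Real.sqrt (R ^ 2) :=
            Real.sqrt_lt_sqrt (Finset.sum_nonneg fun i _ => sq_nonneg _) hsum
        _ = R := Real.sqrt_sq hR.le
    -- nonnegativity
    have hFnonnegBox : ∀ᵐ y ∂(volume.restrict {y : EuclideanSpace ℝ (Fin n) |
        ∀ j, y j ∈ Set.Ioo (max (x j - R) 0) (x j + R)}),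
        0 ≤ ∏ j, (y j) ^ (2 * l j) := by
      have hm : MeasurableSet {y : EuclideanSpace ℝ (Fin n) |
          ∀ j, y j ∈ Set.Ioo (max (x j - R) 0) (x j + R)} := by
        rw [Set.setOf_forall]
        exact MeasurableSet.iInter fun j =>
          measurableSet_preimage (by fun_prop) measurableSet_Ioo
      filter_upwards [ae_restrict_mem hm] with y hy
      exact Finset.prod_nonneg fun j _ =>
        Real.rpow_nonneg (le_trans (le_max_right _ _) (hy j).1.le) _
    have hFnonnegS : ∀ᵐ y ∂(volume.restrict S), 0 ≤ ∏ j, (y j) ^ (2 * l j) := by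
      filter_upwards [ae_restrict_mem hSmeas] with y hy
      exact Finset.prod_nonneg fun j _ => Real.rpow_nonneg (hy.2 j).le _
    have hIntS : IntegrableOn (fun y : EuclideanSpace ℝ (Fin n) =>
        ∏ j, (y j) ^ (2 * l j)) S := hbox.1.mono_set hSsubBox
    constructor
    · -- lower bound
      calc (∏ j, cl j) * (R ^ n * ∏ j, (x j + R) ^ (2 * l j))
          = ∏ j, (cl j * (R * (x j + R) ^ (2 * l j))) := (hprodsplit _ _).symm
        _ ≤ ∏ j, ∫ t in Set.Ioo (x j) (x j + ρ * R), t ^ (2 * l j) := by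
            refine Finset.prod_le_prod (fun j _ => ?_) (fun j _ => hcl j (x j) R (hx j) hR)
            have h2 : (0:ℝ) ≤ (x j + R) ^ (2 * l j) := Real.rpow_nonneg (by have := hx j; linarith) _
            exact mul_nonneg (hcl0 j).le (mul_nonneg hR.le h2)
        _ = ∫ y in {y : EuclideanSpace ℝ (Fin n) |
              ∀ j, y j ∈ Set.Ioo (x j) (x j + ρ * R)}, ∏ j, (y j) ^ (2 * l j) := hcube.2.symm
        _ ≤ ∫ y in S, ∏ j, (y j) ^ (2 * l j) :=
            setIntegral_mono_set hIntS hFnonnegS (HasSubset.Subset.eventuallyLE hcubesubS)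
        _ = wMeasBall l x R := rfl
    · -- upper bound
      calc wMeasBall l x R
          = ∫ y in S, ∏ j, (y j) ^ (2 * l j) := rfl
        _ ≤ ∫ y in {y : EuclideanSpace ℝ (Fin n) |
              ∀ j, y j ∈ Set.Ioo (max (x j - R) 0) (x j + R)}, ∏ j, (y j) ^ (2 * l j) :=
            setIntegral_mono_set hbox.1 hFnonnegBox (HasSubset.Subset.eventuallyLE hSsubBox)
        _ = ∏ j, ∫ t in Set.Ioo (max (x j - R) 0) (x j + R), t ^ (2 * l j) := hbox.2
        _ ≤ ∏ j, (Cu j * (R * (x j + R) ^ (2 * l j))) := by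
            refine Finset.prod_le_prod (fun j _ => intNonneg (le_max_right _ _))
              (fun j _ => hCu j (x j) R (hx j) hR)
        _ = (∏ j, Cu j) * (R ^ n * ∏ j, (x j + R) ^ (2 * l j)) := hprodsplit _ _
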